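/- In the abstract setting, for all α₁, α₂, α₃ ∈ ℕ, all h ∈ H, and every r ∈ ℕ with r ≥ α₁ + α₂ + α₃, one has N₃^r N₁*^{α₁} N₂*^{α₂} N₃*^{α₃} h = N₃^{r − α₁ − α₂ − α₃} N₂^{α₁} N₁^{α₂} h; in particular this vector lies in H. -/

import Mathlib

open ContinuousLinearMap

theorem pow_shift_into_subspace
    {K : Type*} [NormedAddCommGroup K] [InnerProductSpace ℂ K] [CompleteSpace K]
    (N₁ N₂ N₃ : K →L[ℂ] K)
    -- the tuple is commuting
    (hc : ∀ M ∈ ({N₁, N₂, N₃} : Set (K →L[ℂ] K)), ∀ M' ∈ ({N₁, N₂, N₃} : Set (K →L[ℂ] K)),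
      M * M' = M' * M)
    -- each `Nᵢ` is normal and the commutation extends to adjoints
    (hcadj : ∀ M ∈ ({N₁, N₂, N₃} : Set (K →L[ℂ] K)), ∀ M' ∈ ({N₁, N₂, N₃} : Set (K →L[ℂ] K)),
      M * adjoint M' = adjoint M' * M)
    (hU₁ : adjoint N₃ * N₃ = 1) (hU₂ : N₃ * adjoint N₃ = 1)
    (hrel₁ : N₁ = adjoint N₂ * N₃) (hrel₂ : N₂ = adjoint N₁ * N₃)
    -- `H` is a closed subspace invariant under `N₁, N₂, N₃`
    (H : Submodule ℂ K) (hH : IsClosed (H : Set K))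
    (hinv₁ : ∀ x ∈ H, N₁ x ∈ H) (hinv₂ : ∀ x ∈ H, N₂ x ∈ H) (hinv₃ : ∀ x ∈ H, N₃ x ∈ H)
    (α₁ α₂ α₃ : ℕ) (h : K) (hh : h ∈ H) (r : ℕ) (hr : α₁ + α₂ + α₃ ≤ r) :
    (N₃ ^ r) ((adjoint N₁ ^ α₁) ((adjoint N₂ ^ α₂) ((adjoint N₃ ^ α₃) h))) =
        (N₃ ^ (r - α₁ - α₂ - α₃)) ((N₂ ^ α₁) ((N₁ ^ α₂) h)) ∧
      (N₃ ^ r) ((adjoint N₁ ^ α₁) ((adjoint N₂ ^ α₂) ((adjoint N₃ ^ α₃) h))) ∈ H := by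
  have m1 : N₁ ∈ ({N₁, N₂, N₃} : Set (K →L[ℂ] K)) := by simp
  have m2 : N₂ ∈ ({N₁, N₂, N₃} : Set (K →L[ℂ] K)) := by simp
  have m3 : N₃ ∈ ({N₁, N₂, N₃} : Set (K →L[ℂ] K)) := by simp
  -- basic commutation facts
  have c31 : Commute N₃ (adjoint N₁) := hcadj N₃ m3 N₁ m1
  have c32 : Commute N₃ (adjoint N₂) := hcadj N₃ m3 N₂ m2
  have c33 : Commute N₃ (adjoint N₃) := hcadj N₃ m3 N₃ m3
  have c1a2 : Commute (adjoint N₁) (adjoint N₂) := by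
    have := congrArg adjoint (hc N₂ m2 N₁ m1)
    simpa [Commute, SemiconjBy, adjoint_comp, ContinuousLinearMap.mul_def] using this
  have c1a3 : Commute (adjoint N₁) (adjoint N₃) := by
    have := congrArg adjoint (hc N₃ m3 N₁ m1)
    simpa [Commute, SemiconjBy, adjoint_comp, ContinuousLinearMap.mul_def] using this
  have c2a3 : Commute (adjoint N₂) (adjoint N₃) := by
    have := congrArg adjoint (hc N₃ m3 N₂ m2)
    simpa [Commute, SemiconjBy, adjoint_comp, ContinuousLinearMap.mul_def] using this
  -- key pointwise relations
  have hadj1 : adjoint N₁ = adjoint N₃ * N₂ := by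
    rw [hrel₁]
    simp [ContinuousLinearMap.mul_def, adjoint_comp, adjoint_adjoint]
  have hadj2 : adjoint N₂ = adjoint N₃ * N₁ := by
    rw [hrel₂]
    simp [ContinuousLinearMap.mul_def, adjoint_comp, adjoint_adjoint]
  have hA1 : N₃ * adjoint N₁ = N₂ := by
    rw [hadj1, ← mul_assoc, hU₂, one_mul]
  have hA2 : N₃ * adjoint N₂ = N₁ := by
    rw [hadj2, ← mul_assoc, hU₂, one_mul]
  have e1 : N₃ ^ α₁ * (adjoint N₁) ^ α₁ = N₂ ^ α₁ := by
    rw [← c31.mul_pow, hA1]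
  have e2 : N₃ ^ α₂ * (adjoint N₂) ^ α₂ = N₁ ^ α₂ := by
    rw [← c32.mul_pow, hA2]
  have e3 : N₃ ^ α₃ * (adjoint N₃) ^ α₃ = 1 := by
    rw [← c33.mul_pow, hU₂, one_pow]
  -- the operator identity
  have key : N₃ ^ r * (adjoint N₁) ^ α₁ * ((adjoint N₂) ^ α₂ * (adjoint N₃) ^ α₃)
      = N₃ ^ (r - α₁ - α₂ - α₃) * N₂ ^ α₁ * N₁ ^ α₂ := by
    obtain ⟨m, rfl⟩ : ∃ m, r = m + α₁ + α₂ + α₃ := ⟨r - (α₁ + α₂ + α₃), by omega⟩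
    have hm : m + α₁ + α₂ + α₃ - α₁ - α₂ - α₃ = m := by omega
    rw [hm, pow_add, pow_add, pow_add]
    calc N₃ ^ m * N₃ ^ α₁ * N₃ ^ α₂ * N₃ ^ α₃ * (adjoint N₁) ^ α₁ *
          ((adjoint N₂) ^ α₂ * (adjoint N₃) ^ α₃)
        = N₃ ^ m * (N₃ ^ α₁ * (adjoint N₁) ^ α₁) * (N₃ ^ α₂ * (adjoint N₂) ^ α₂) *
          (N₃ ^ α₃ * (adjoint N₃) ^ α₃) := by
          simp only [mul_assoc]
          rw [(c31.pow_pow α₃ α₁).left_comm, (c32.pow_pow α₃ α₂).left_comm,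
            (c31.pow_pow α₂ α₁).left_comm]
      _ = N₃ ^ m * N₂ ^ α₁ * N₁ ^ α₂ * 1 := by rw [e1, e2, e3]
      _ = N₃ ^ m * N₂ ^ α₁ * N₁ ^ α₂ := by rw [mul_one]
  have keyh : (N₃ ^ r) ((adjoint N₁ ^ α₁) ((adjoint N₂ ^ α₂) ((adjoint N₃ ^ α₃) h))) =
      (N₃ ^ (r - α₁ - α₂ - α₃)) ((N₂ ^ α₁) ((N₁ ^ α₂) h)) := by
    have := congrArg (fun T : K →L[ℂ] K => T h) key
    simpa [ContinuousLinearMap.mul_apply] using this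
  have hinvpow : ∀ (T : K →L[ℂ] K), (∀ x ∈ H, T x ∈ H) → ∀ (n : ℕ) (x : K), x ∈ H →
      (T ^ n) x ∈ H := by
    intro T hT n
    induction n with
    | zero => intro x hx; simpa using hx
    | succ n ih =>
      intro x hx
      rw [pow_succ, ContinuousLinearMap.mul_apply]
      exact ih _ (hT x hx)
  refine ⟨keyh, ?_⟩
  rw [keyh]
  exact hinvpow N₃ hinv₃ _ _ (hinvpow N₂ hinv₂ _ _ (hinvpow N₁ hinv₁ _ _ hh))
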